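/- Let γ be a differentiable real-valued function on an open interval I (with variable ρ) satisfying 2 γ γ' + 6 γ = (1 − ρ²)(3 − ρ) on I, and suppose that 1 − ρ ≠ 0 and 1 − ρ − γ(ρ) ≠ 0 for all ρ ∈ I. Define z(ρ) := (1 − ρ)² / (2(1 − ρ − γ(ρ))) and v(ρ) := ρ − 1. Then z is differentiable and the relation 2 z(ρ) (1 − z(ρ)²) = (v(ρ) + 2 z(ρ)) · z'(ρ) holds for all ρ ∈ I; that is, the curve (z(ρ), v(ρ)) satisfies equation (27) with z as independent variable. -/

import Mathlib

/-- Passing from equation (25) to equation (27): if `γ` solves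
`2 γ γ' + 6 γ = (1 - ρ²)(3 - ρ)` on an open interval `I` with `1 - ρ ≠ 0` and
`1 - ρ - γ(ρ) ≠ 0`, then `z(ρ) := (1-ρ)²/(2(1-ρ-γ(ρ)))` is differentiable and
the curve `(z(ρ), v(ρ))` with `v(ρ) := ρ - 1` satisfies
`2 z (1 - z²) = (v + 2z) z'` on `I`. -/
theorem eq25_to_eq27
    (I : Set ℝ) (hI : IsOpen I) (hI' : I.OrdConnected)
    (γ : ℝ → ℝ) (hγdiff : DifferentiableOn ℝ γ I)
    (heq : ∀ ρ ∈ I, 2 * γ ρ * deriv γ ρ + 6 * γ ρ = (1 - ρ ^ 2) * (3 - ρ))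
    (h1 : ∀ ρ ∈ I, 1 - ρ ≠ 0)
    (h2 : ∀ ρ ∈ I, 1 - ρ - γ ρ ≠ 0)
    (z v : ℝ → ℝ)
    (hz : z = fun ρ => (1 - ρ) ^ 2 / (2 * (1 - ρ - γ ρ)))
    (hv : v = fun ρ => ρ - 1) :
    ∀ ρ ∈ I,
      DifferentiableAt ℝ z ρ ∧
      2 * z ρ * (1 - (z ρ) ^ 2) = (v ρ + 2 * z ρ) * deriv z ρ := by
  intro ρ hρ
  have hγ : DifferentiableAt ℝ γ ρ :=
    (hγdiff ρ hρ).differentiableAt (hI.mem_nhds hρ)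
  have h1ρ := h1 ρ hρ
  have h2ρ := h2 ρ hρ
  have hden : (2 : ℝ) * (1 - ρ - γ ρ) ≠ 0 := mul_ne_zero two_ne_zero h2ρ
  have hnum : HasDerivAt (fun x : ℝ => (1 - x) ^ 2)
      (2 * (1 - ρ) ^ 1 * (-1)) ρ := by
    have := ((hasDerivAt_id ρ).const_sub 1).fun_pow 2
    simpa using this
  have hg := hγ.hasDerivAt
  have hdenD : HasDerivAt (fun x : ℝ => 2 * (1 - x - γ x))
      (2 * (-1 - deriv γ ρ)) ρ := by
    have h := (((hasDerivAt_id ρ).const_sub 1).sub hg).const_mul (2 : ℝ)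
    simpa using h
  have hzD : HasDerivAt z
      ((2 * (1 - ρ) ^ 1 * (-1) * (2 * (1 - ρ - γ ρ)) -
        (1 - ρ) ^ 2 * (2 * (-1 - deriv γ ρ))) / (2 * (1 - ρ - γ ρ)) ^ 2) ρ := by
    rw [hz]
    exact hnum.div hdenD hden
  refine ⟨hzD.differentiableAt, ?_⟩
  rw [hzD.deriv, hz, hv]
  simp only
  have hODE := heq ρ hρ
  field_simp
  linear_combination (-(1-ρ)^2) * hODE
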